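/- Let C₁ precede C₂ be northwest monotone convex chains with tail(C₁).y < tail(C₂).y, and let (p₁, p₂) be a bridge between them (p₁ ∈ C₁, p₂ ∈ C₂, the line through p₁, p₂ tangent to both chains). Then the concatenation of the portion of C₁ up to p₁, followed by the portion of C₂ from p₂ onward, is again a northwest monotone convex chain. -/

import Mathlib

/- Cross product test: `cross a b q > 0` means `q` is strictly above the (directed) line
through `a` and `b` (with `a.1 < b.1`). -/
def cross (a b q : ℝ × ℝ) : ℝ :=
  (b.1 - a.1) * (q.2 - a.2) - (b.2 - a.2) * (q.1 - a.1)

/- A northwest monotone convex chain: strictly increasing x- and y-coordinates, and no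
point of the chain lies strictly above the line through any two consecutive chain points. -/
def IsNWChain (l : List (ℝ × ℝ)) : Prop :=
  l.Chain' (fun a b => a.1 < b.1) ∧
  l.Chain' (fun a b => a.2 < b.2) ∧
  ∀ i, (h : i + 1 < l.length) → ∀ q ∈ l,
    cross (l[i]'(Nat.lt_of_succ_lt h)) (l[i+1]'h) q ≤ 0

/- STATEMENT 9: if `(p₁, p₂)` is a bridge between chain `C₁ = a ++ p₁ :: b` (all of it to
the left of) chain `C₂ = c ++ p₂ :: d`, then the portion of `C₁` up to `p₁` followed by the
portion of `C₂` from `p₂` on is again a northwest monotone convex chain. -/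
private lemma key1 (u v s t r : ℝ × ℝ) (huv : u.1 < v.1) (hus : u.1 < s.1)
    (hst : s.1 < t.1) (hsr : s.1 ≤ r.1)
    (h1 : cross u v s ≤ 0) (h2 : cross s t u ≤ 0) (h3 : cross s t r ≤ 0) :
    cross u v r ≤ 0 := by
  have hid : (s.1 - u.1) * ((t.1 - s.1) * cross u v r) =
      (v.1 - u.1) * ((s.1 - u.1) * cross s t r) +
      (v.1 - u.1) * ((r.1 - s.1) * cross s t u) +
      (t.1 - s.1) * ((r.1 - u.1) * cross u v s) := by
    unfold cross; ring
  by_contra hc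
  push_neg at hc
  nlinarith [mul_nonpos_of_nonneg_of_nonpos (by linarith : (0:ℝ) ≤ v.1 - u.1)
      (mul_nonpos_of_nonneg_of_nonpos (by linarith : (0:ℝ) ≤ s.1 - u.1) h3),
    mul_nonpos_of_nonneg_of_nonpos (by linarith : (0:ℝ) ≤ v.1 - u.1)
      (mul_nonpos_of_nonneg_of_nonpos (by linarith : (0:ℝ) ≤ r.1 - s.1) h2),
    mul_nonpos_of_nonneg_of_nonpos (by linarith : (0:ℝ) ≤ t.1 - s.1)
      (mul_nonpos_of_nonneg_of_nonpos (by linarith : (0:ℝ) ≤ r.1 - u.1) h1),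
    mul_pos (by linarith : (0:ℝ) < s.1 - u.1) (mul_pos (by linarith : (0:ℝ) < t.1 - s.1) hc)]

private lemma key2 (u v s t r : ℝ × ℝ) (huv : u.1 < v.1) (hst : s.1 < t.1)
    (htu : t.1 ≤ u.1) (hrs : r.1 ≤ s.1)
    (h1 : cross u v t ≤ 0) (h2 : cross s t v ≤ 0) (h3 : cross s t r ≤ 0) :
    cross u v r ≤ 0 := by
  have hid : (v.1 - t.1) * ((t.1 - s.1) * cross u v r) =
      (v.1 - t.1) * ((v.1 - u.1) * cross s t r) +
      (v.1 - r.1) * ((t.1 - s.1) * cross u v t) +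
      (t.1 - r.1) * ((v.1 - u.1) * cross s t v) := by
    unfold cross; ring
  by_contra hc
  push_neg at hc
  nlinarith [mul_nonpos_of_nonneg_of_nonpos (by linarith : (0:ℝ) ≤ v.1 - t.1)
      (mul_nonpos_of_nonneg_of_nonpos (by linarith : (0:ℝ) ≤ v.1 - u.1) h3),
    mul_nonpos_of_nonneg_of_nonpos (by linarith : (0:ℝ) ≤ v.1 - r.1)
      (mul_nonpos_of_nonneg_of_nonpos (by linarith : (0:ℝ) ≤ t.1 - s.1) h1),
    mul_nonpos_of_nonneg_of_nonpos (by linarith : (0:ℝ) ≤ t.1 - r.1)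
      (mul_nonpos_of_nonneg_of_nonpos (by linarith : (0:ℝ) ≤ v.1 - u.1) h2),
    mul_pos (by linarith : (0:ℝ) < v.1 - t.1) (mul_pos (by linarith : (0:ℝ) < t.1 - s.1) hc)]

private lemma chain_lt {f : ℝ × ℝ → ℝ} {l : List (ℝ × ℝ)}
    (h : l.Chain' fun a b => f a < f b) {i j : ℕ} (hij : i < j) (hj : j < l.length) :
    f (l[i]'(hij.trans hj)) < f l[j] := by
  haveI : IsTrans (ℝ × ℝ) (fun a b => f a < f b) := ⟨fun _ _ _ => lt_trans⟩
  haveI : Trans (fun a b : ℝ × ℝ => f a < f b) (fun a b => f a < f b) (fun a b => f a < f b) :=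
    ⟨lt_trans⟩
  exact List.pairwise_iff_getElem.1 (List.isChain_iff_pairwise.1 h) i j (hij.trans hj) hj hij

private lemma chain_le {f : ℝ × ℝ → ℝ} {l : List (ℝ × ℝ)}
    (h : l.Chain' fun a b => f a < f b) {i j : ℕ} (hij : i ≤ j) (hj : j < l.length) :
    f (l[i]'(lt_of_le_of_lt hij hj)) ≤ f l[j] := by
  rcases eq_or_lt_of_le hij with rfl | hlt
  · exact le_refl _
  · exact (chain_lt h hlt hj).le

theorem bridge_concat_is_chain (a b c d : List (ℝ × ℝ)) (p₁ p₂ : ℝ × ℝ)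
    (h₁ : IsNWChain (a ++ p₁ :: b)) (h₂ : IsNWChain (c ++ p₂ :: d))
    (hprec : ((a ++ p₁ :: b).getLast (by simp)).1 < ((c ++ p₂ :: d).head (by simp)).1)
    (htail : ((a ++ p₁ :: b).getLast (by simp)).2 < ((c ++ p₂ :: d).getLast (by simp)).2)
    (hbridge : ∀ q, (q ∈ a ++ p₁ :: b ∨ q ∈ c ++ p₂ :: d) → cross p₁ p₂ q ≤ 0) :
    IsNWChain (a ++ p₁ :: p₂ :: d) := by
  obtain ⟨hx₁, hy₁, hc₁⟩ := h₁
  obtain ⟨hx₂, hy₂, hc₂⟩ := h₂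
  have hlen₁ : (a ++ p₁ :: b).length = a.length + (b.length + 1) := by simp
  have hlen₂ : (c ++ p₂ :: d).length = c.length + (d.length + 1) := by simp
  have hlenL : (a ++ p₁ :: p₂ :: d).length = a.length + (d.length + 2) := by simp
  -- p₁ and p₂ as elements
  have hp₁e : ∀ (h : a.length < (a ++ p₁ :: b).length), (a ++ p₁ :: b)[a.length]'h = p₁ := by
    intro h; rw [List.getElem_append_right (le_refl _)]; simp
  have hp₂e : ∀ (h : c.length < (c ++ p₂ :: d).length), (c ++ p₂ :: d)[c.length]'h = p₂ := by
    intro h; rw [List.getElem_append_right (le_refl _)]; simp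
  have hp₁m : p₁ ∈ a ++ p₁ :: b := by simp
  have hp₂m : p₂ ∈ c ++ p₂ :: d := by simp
  -- x-order of the bridge
  have hp12x : p₁.1 < p₂.1 := by
    have h1 : p₁.1 ≤ ((a ++ p₁ :: b).getLast (by simp)).1 := by
      rw [List.getLast_eq_getElem]
      have := chain_le (f := Prod.fst) hx₁
        (show a.length ≤ (a ++ p₁ :: b).length - 1 by omega) (by omega)
      rwa [hp₁e] at this
    have h2 : ((c ++ p₂ :: d).head (by simp)).1 ≤ p₂.1 := by
      rw [List.head_eq_getElem]
      have := chain_le (f := Prod.fst) hx₂ (show 0 ≤ c.length by omega) (by omega)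
      rwa [hp₂e] at this
    linarith
  -- p₁ is below the tail of C₁ in y
  have hp₁y : p₁.2 ≤ ((a ++ p₁ :: b).getLast (by simp)).2 := by
    rw [List.getLast_eq_getElem]
    have := chain_le (f := Prod.snd) hy₁
      (show a.length ≤ (a ++ p₁ :: b).length - 1 by omega) (by omega)
    rwa [hp₁e] at this
  -- y-order of the bridge
  have hp12y : p₁.2 < p₂.2 := by
    by_contra hc
    push_neg at hc
    have hs := hbridge ((c ++ p₂ :: d).getLast (by simp)) (Or.inr (List.getLast_mem _))
    have hsx : p₂.1 ≤ ((c ++ p₂ :: d).getLast (by simp)).1 := by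
      rw [List.getLast_eq_getElem]
      have := chain_le (f := Prod.fst) hx₂
        (show c.length ≤ (c ++ p₂ :: d).length - 1 by omega) (by omega)
      rwa [hp₂e] at this
    unfold cross at hs
    nlinarith [htail, hp₁y, hp12x]
  -- getElem of the new list, left part
  have hLleft : ∀ j (hj : j ≤ a.length) (hL : j < (a ++ p₁ :: p₂ :: d).length),
      (a ++ p₁ :: p₂ :: d)[j]'hL = (a ++ p₁ :: b)[j]'(by omega) := by
    intro j hj hL
    rcases lt_or_eq_of_le hj with hlt | rfl
    · rw [List.getElem_append_left hlt, List.getElem_append_left hlt]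
    · rw [List.getElem_append_right (le_refl _), List.getElem_append_right (le_refl _)]
      simp
  -- getElem of the new list, right part
  have hLright : ∀ j (hj : a.length < j) (hL : j < (a ++ p₁ :: p₂ :: d).length),
      (a ++ p₁ :: p₂ :: d)[j]'hL
        = (c ++ p₂ :: d)[c.length + (j - (a.length + 1))]'(by omega) := by
    intro j hj hL
    rw [List.getElem_append_right (by omega : a.length ≤ j),
      List.getElem_append_right (by omega : c.length ≤ c.length + (j - (a.length + 1)))]
    simp only [show j - a.length = (j - (a.length + 1)) + 1 from by omega,
      show c.length + (j - (a.length + 1)) - c.length = j - (a.length + 1) from by omega]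
    rw [List.getElem_cons_succ]
  -- elements of a are strictly left of p₁
  have ha_lt : ∀ q ∈ a, q.1 < p₁.1 := by
    intro q hq
    obtain ⟨m, hm, rfl⟩ := List.mem_iff_getElem.1 hq
    have h1 : a[m] = (a ++ p₁ :: b)[m]'(by omega) := (List.getElem_append_left hm).symm
    have := chain_lt (f := Prod.fst) hx₁ (show m < a.length by omega)
      (show a.length < (a ++ p₁ :: b).length by omega)
    rw [hp₁e] at this
    rwa [h1]
  -- elements of d are strictly right of p₂
  have hd_gt : ∀ q ∈ d, p₂.1 < q.1 := by
    intro q hq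
    obtain ⟨m, hm, rfl⟩ := List.mem_iff_getElem.1 hq
    have h1 : d[m] = (c ++ p₂ :: d)[c.length + (m + 1)]'(by omega) := by
      rw [List.getElem_append_right (by omega : c.length ≤ c.length + (m + 1))]
      simp only [show c.length + (m + 1) - c.length = m + 1 from by omega]
      rw [List.getElem_cons_succ]
    have := chain_lt (f := Prod.fst) hx₂ (show c.length < c.length + (m + 1) by omega)
      (show c.length + (m + 1) < (c ++ p₂ :: d).length by omega)
    rw [hp₂e] at this
    rwa [h1]
  have hd_mem : ∀ q ∈ d, q ∈ c ++ p₂ :: d := by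
    intro q hq; exact List.mem_append_right _ (List.mem_cons_of_mem _ hq)
  refine ⟨?_, ?_, ?_⟩
  · -- x-chain
    unfold List.Chain' at hx₁ hx₂ ⊢; rw [List.isChain_append]
    refine ⟨hx₁.prefix ⟨p₁ :: b, rfl⟩, List.isChain_cons_cons.2 ⟨hp12x, hx₂.suffix ⟨c, rfl⟩⟩, ?_⟩
    intro x hx y hy
    simp only [List.head?_cons, Option.mem_some_iff] at hy
    subst hy
    exact (List.isChain_append.1 hx₁).2.2 x hx p₁ (by simp)
  · -- y-chain
    unfold List.Chain' at hy₁ hy₂ ⊢; rw [List.isChain_append]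
    refine ⟨hy₁.prefix ⟨p₁ :: b, rfl⟩, List.isChain_cons_cons.2 ⟨hp12y, hy₂.suffix ⟨c, rfl⟩⟩, ?_⟩
    intro x hx y hy
    simp only [List.head?_cons, Option.mem_some_iff] at hy
    subst hy
    exact (List.isChain_append.1 hy₁).2.2 x hx p₁ (by simp)
  · -- convexity
    intro i hi q hq
    have hq' : q ∈ a ∨ q = p₁ ∨ q = p₂ ∨ q ∈ d := by simpa using hq
    rcases Nat.lt_trichotomy i a.length with hiA | hiB | hiC
    · -- edge inside a ++ [p₁]
      rw [hLleft i (by omega) (by omega), hLleft (i+1) (by omega) hi]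
      have hedge := hc₁ i (by omega)
      rcases hq' with hqa | hq1 | hq2 | hqd
      · exact hedge q (List.mem_append_left _ hqa)
      · rw [hq1]; exact hedge p₁ hp₁m
      · rw [hq2]
        exact key1 _ _ p₁ p₂ p₂
          (chain_lt (f := Prod.fst) hx₁ (Nat.lt_succ_self i) (by omega))
          (by have := chain_lt (f := Prod.fst) hx₁ hiA (by omega); rwa [hp₁e] at this)
          hp12x hp12x.le (hedge p₁ hp₁m)
          (hbridge _ (Or.inl (List.getElem_mem _))) (hbridge p₂ (Or.inr hp₂m))
      · exact key1 _ _ p₁ p₂ q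
          (chain_lt (f := Prod.fst) hx₁ (Nat.lt_succ_self i) (by omega))
          (by have := chain_lt (f := Prod.fst) hx₁ hiA (by omega); rwa [hp₁e] at this)
          hp12x (by have := hd_gt q hqd; linarith) (hedge p₁ hp₁m)
          (hbridge _ (Or.inl (List.getElem_mem _))) (hbridge q (Or.inr (hd_mem q hqd)))
    · -- the bridge edge
      subst hiB
      have hu : (a ++ p₁ :: p₂ :: d)[a.length]'(by omega) = p₁ := by
        rw [List.getElem_append_right (le_refl _)]; simp
      have hv : (a ++ p₁ :: p₂ :: d)[a.length + 1]'hi = p₂ := by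
        rw [List.getElem_append_right (by omega : a.length ≤ a.length + 1)]
        simp
      rw [hu, hv]
      rcases hq' with hqa | hq1 | hq2 | hqd
      · exact hbridge q (Or.inl (List.mem_append_left _ hqa))
      · rw [hq1]; exact hbridge p₁ (Or.inl hp₁m)
      · rw [hq2]; exact hbridge p₂ (Or.inr hp₂m)
      · exact hbridge q (Or.inr (hd_mem q hqd))
    · -- edge inside p₂ :: d
      have hu := hLright i hiC (by omega)
      have hv := hLright (i+1) (by omega) hi
      rw [hu, hv, getElem_congr_idx (show c.length + (i + 1 - (a.length + 1))
        = c.length + (i - (a.length + 1)) + 1 from by omega)]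
      have hj2 : c.length + (i - (a.length + 1)) + 1 < (c ++ p₂ :: d).length := by omega
      have hedge := hc₂ (c.length + (i - (a.length + 1))) hj2
      have htu : p₂.1 ≤ ((c ++ p₂ :: d)[c.length + (i - (a.length + 1))]'(by omega)).1 := by
        have := chain_le (f := Prod.fst) hx₂
          (show c.length ≤ c.length + (i - (a.length + 1)) by omega) (by omega)
        rwa [hp₂e] at this
      have huv := chain_lt (f := Prod.fst) hx₂
        (Nat.lt_succ_self (c.length + (i - (a.length + 1)))) hj2
      rcases hq' with hqa | hq1 | hq2 | hqd
      · exact key2 _ _ p₁ p₂ q huv hp12x htu (ha_lt q hqa).le (hedge p₂ hp₂m)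
          (hbridge _ (Or.inr (List.getElem_mem _)))
          (hbridge q (Or.inl (List.mem_append_left _ hqa)))
      · rw [hq1]
        exact key2 _ _ p₁ p₂ p₁ huv hp12x htu (le_refl _) (hedge p₂ hp₂m)
          (hbridge _ (Or.inr (List.getElem_mem _))) (hbridge p₁ (Or.inl hp₁m))
      · rw [hq2]; exact hedge p₂ hp₂m
      · exact hedge q (hd_mem q hqd)
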